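/- Let A be the ring of integers of a local field, t ∈ m_A nonzero, Γ a profinite group, and M a finitely generated A-module with continuous Γ-action. Then the continuous cohomology H^i(Γ, M) is a finitely generated A-module if and only if H^i(Γ, M)/(t) is finite. -/

import Mathlib

open scoped Pointwise

section Helpers

variable {A : Type} [CommRing A]

lemma memJpow' {N : Type*} [AddCommGroup N] [Module A N] {t : A} {K : ℕ} {x : N} :
    x ∈ (Ideal.span {t})^K • (⊤ : Submodule A N) ↔ ∃ y, x = t^K • y := by
  rw [Ideal.span_singleton_pow, Submodule.ideal_span_singleton_smul]
  constructor
  · intro h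
    rw [← SetLike.mem_coe, Submodule.coe_pointwise_smul] at h
    obtain ⟨y, -, hy⟩ := h
    exact ⟨y, hy.symm⟩
  · rintro ⟨y, rfl⟩
    exact Submodule.smul_mem_pointwise_smul y _ _ Submodule.mem_top

lemma memJ1' {N : Type*} [AddCommGroup N] [Module A N] {t : A} {x : N} :
    x ∈ (Ideal.span {t}) • (⊤ : Submodule A N) ↔ ∃ y, x = t • y := by
  have := memJpow' (N := N) (t := t) (K := 1) (x := x)
  simpa using this

end Helpers

section Helpers2
variable {A : Type} [CommRing A]
variable {N : Type*} [AddCommGroup N] [Module A N]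


lemma smod_mono {U V : Submodule A N} (h : U ≤ V) {x y : N} (hxy : x ≡ y [SMOD U]) :
    x ≡ y [SMOD V] := SModEq.sub_mem.mpr (h (SModEq.sub_mem.mp hxy))

lemma powSmulLe' {I : Ideal A} {m n : ℕ} (h : m ≤ n) :
    (I ^ n • ⊤ : Submodule A N) ≤ I ^ m • ⊤ :=
  Submodule.smul_mono_left (Ideal.pow_le_pow_right h)

lemma isPrecomplete_of_pow {I J : Ideal A} {v : ℕ} (hv : 1 ≤ v) (hJ : J = I ^ v)
    (h : IsPrecomplete I N) : IsPrecomplete J N := by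
  constructor
  intro f hf
  have hJn : ∀ n : ℕ, J ^ n = I ^ (v * n) := fun n => by rw [hJ, ← pow_mul]
  have hf' : ∀ {m n}, m ≤ n → f m ≡ f n [SMOD (I ^ m • ⊤ : Submodule A N)] := by
    intro m n hmn
    refine smod_mono ?_ (hf hmn)
    rw [hJn]
    exact powSmulLe' (Nat.le_mul_of_pos_left m hv)
  obtain ⟨L, hL⟩ := h.prec hf'
  refine ⟨L, fun n => ?_⟩
  have h1 : f n ≡ f (v * n) [SMOD (J ^ n • ⊤ : Submodule A N)] :=
    hf (Nat.le_mul_of_pos_left n hv)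
  have h2 : f (v * n) ≡ L [SMOD (J ^ n • ⊤ : Submodule A N)] := by
    rw [hJn]; exact hL (v * n)
  exact h1.trans h2

lemma isHausdorff_of_pow {I J : Ideal A} {v : ℕ} (hv : 1 ≤ v) (hJ : J = I ^ v)
    (h : IsHausdorff I N) : IsHausdorff J N := by
  constructor
  intro x hx
  refine h.haus x fun n => ?_
  refine smod_mono ?_ (hx n)
  rw [hJ, ← pow_mul]
  exact powSmulLe' (Nat.le_mul_of_pos_left n hv)

end Helpers2

section Helpers3
variable {A : Type} [CommRing A]
lemma powSmulLe'mem {N : Type*} [AddCommGroup N] [Module A N] {I : Ideal A} {m n : ℕ}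
    (h : m ≤ n) {x : N} (hx : x ∈ (I ^ n • ⊤ : Submodule A N)) : x ∈ (I ^ m • ⊤ : Submodule A N) :=
  powSmulLe' h hx

lemma pi_precomplete {t : A} {r : ℕ} (h : IsPrecomplete (Ideal.span {t}) A) :
    IsPrecomplete (Ideal.span {t}) (Fin r → A) := by
  constructor
  intro f hf
  have key : ∀ j : Fin r, ∃ L : A, ∀ n, f n j ≡ L
      [SMOD ((Ideal.span {t}) ^ n • ⊤ : Submodule A A)] := by
    intro j
    refine h.prec (f := fun n => f n j) ?_
    intro m n hmn
    obtain ⟨y, hy⟩ := memJpow'.mp (SModEq.sub_mem.mp (hf hmn))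
    refine SModEq.sub_mem.mpr (memJpow'.mpr ⟨y j, ?_⟩)
    have := congrFun hy j
    simpa using this
  choose L hL using key
  refine ⟨L, fun n => SModEq.sub_mem.mpr ?_⟩
  choose y hy using fun j => memJpow'.mp (SModEq.sub_mem.mp (hL j n))
  exact memJpow'.mpr ⟨y, funext fun j => by simpa using hy j⟩

lemma precomplete_of_surjective {P N : Type*} [AddCommGroup P] [Module A P]
    [AddCommGroup N] [Module A N] (p : P →ₗ[A] N) (hp : Function.Surjective p)
    {J : Ideal A} (h : IsPrecomplete J P) : IsPrecomplete J N := by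
  constructor
  intro f hf
  have hmap : ∀ n : ℕ, Submodule.map p ((J ^ n • ⊤ : Submodule A P)) = J ^ n • ⊤ := by
    intro n
    rw [Submodule.map_smul'', Submodule.map_top, LinearMap.range_eq_top.mpr hp]
  have hdelta : ∀ n : ℕ, ∃ δ : P, δ ∈ (J ^ n • ⊤ : Submodule A P) ∧ p δ = f (n+1) - f n := by
    intro n
    have : f (n+1) - f n ∈ (J ^ n • ⊤ : Submodule A N) := by
      have := SModEq.sub_mem.mp (hf (Nat.le_succ n))
      simpa using (Submodule.neg_mem _ this)
    rw [← hmap n] at this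
    obtain ⟨δ, hδ, hδ2⟩ := this
    exact ⟨δ, hδ, hδ2⟩
  choose δ hδmem hδval using hdelta
  obtain ⟨g0, hg0⟩ := hp (f 0)
  set g : ℕ → P := fun n => Nat.rec g0 (fun k gk => gk + δ k) n with hg
  have hgp : ∀ n, p (g n) = f n := by
    intro n
    induction n with
    | zero => exact hg0
    | succ k ih => rw [show g (k+1) = g k + δ k from rfl, map_add, ih, hδval k]; abel
  have hgc : ∀ {m n}, m ≤ n → g m ≡ g n [SMOD (J ^ m • ⊤ : Submodule A P)] := by
    intro m n hmn
    induction n with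
    | zero => obtain rfl := Nat.le_zero.mp hmn; exact SModEq.refl _
    | succ k ih =>
      rcases Nat.lt_or_ge m (k+1) with hlt | hge
      · have hmk : m ≤ k := Nat.lt_succ_iff.mp hlt
        refine (ih hmk).trans (SModEq.sub_mem.mpr ?_)
        have : g k - g (k + 1) = -δ k := by simp [hg]
        rw [this]
        exact Submodule.neg_mem _ (powSmulLe'mem hmk (hδmem k))
      · have : m = k + 1 := le_antisymm hmn hge
        subst this; rfl
  obtain ⟨L, hL⟩ := h.prec hgc
  refine ⟨p L, fun n => SModEq.sub_mem.mpr ?_⟩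
  have : g n - L ∈ (J ^ n • ⊤ : Submodule A P) := SModEq.sub_mem.mp (hL n)
  have := Submodule.mem_map_of_mem (f := p) this
  rw [hmap n] at this
  simpa [hgp n] using this

end Helpers3

section Helpers4
variable {A : Type} [CommRing A]
lemma funLimit {X : Type*} [TopologicalSpace X] {t : A} {M : Type} [AddCommGroup M]
    [Module A M] [TopologicalSpace M]
    (hadic : ∀ s : Set M, IsOpen s ↔ ∀ m ∈ s, ∃ n : ℕ,
      {y : M | y - m ∈ (Ideal.span {t} ^ n) • (⊤ : Submodule A M)} ⊆ s)
    (hpre : IsPrecomplete (Ideal.span {t}) M)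
    (u : ℕ → X → M) (hu : ∀ K, Continuous (u K))
    (hc : ∀ {K K'}, K ≤ K' → ∃ w : X → M, u K' - u K = t ^ K • w) :
    ∃ c : X → M, Continuous c ∧ ∀ K, ∃ w : X → M, c - u K = t ^ K • w := by
  have hball : ∀ (m : M) (n : ℕ),
      IsOpen {y : M | y - m ∈ (Ideal.span {t} ^ n) • (⊤ : Submodule A M)} := by
    intro m n
    rw [hadic]
    intro m' hm'
    refine ⟨n, fun y hy => ?_⟩
    have : y - m = (y - m') + (m' - m) := by abel
    rw [Set.mem_setOf_eq, this]
    exact Submodule.add_mem _ hy hm'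
  have key : ∀ x : X, ∃ L : M, ∀ n, u n x ≡ L
      [SMOD ((Ideal.span {t}) ^ n • ⊤ : Submodule A M)] := by
    intro x
    refine hpre.prec (f := fun K => u K x) ?_
    intro m n hmn
    obtain ⟨w, hw⟩ := hc hmn
    refine SModEq.sub_mem.mpr (memJpow'.mpr ⟨-(w x), ?_⟩)
    have := congrFun hw x
    simp only [Pi.sub_apply, Pi.smul_apply] at this
    rw [smul_neg, ← this]
    abel
  choose c hcL using key
  have hdiff : ∀ K x, c x - u K x ∈ ((Ideal.span {t}) ^ K • ⊤ : Submodule A M) := by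
    intro K x
    have := SModEq.sub_mem.mp (hcL x K)
    simpa using Submodule.neg_mem _ this
  refine ⟨c, ?_, ?_⟩
  · rw [continuous_def]
    intro s hs
    rw [isOpen_iff_forall_mem_open]
    intro x₀ hx₀
    obtain ⟨n, hn⟩ := (hadic s).mp hs (c x₀) hx₀
    refine ⟨(u n) ⁻¹' {y : M | y - u n x₀ ∈ (Ideal.span {t} ^ n) • (⊤ : Submodule A M)},
      ?_, (hu n).isOpen_preimage _ (hball _ n), by simp⟩
    intro y hy
    refine hn ?_
    have h1 := hdiff n y
    have h2 := hdiff n x₀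
    have : c y - c x₀ = (c y - u n y) + (u n y - u n x₀) + (u n x₀ - c x₀) := by abel
    rw [Set.mem_setOf_eq, this]
    exact Submodule.add_mem _ (Submodule.add_mem _ h1 hy) (by simpa [neg_sub] using Submodule.neg_mem _ h2)
  · intro K
    choose w hw using fun x => memJpow'.mp (hdiff K x)
    exact ⟨w, funext fun x => by simpa using hw x⟩

end Helpers4

section Helpers5
variable {A : Type} [CommRing A]
lemma finite_of_sub_quot {Q : Type*} [AddCommGroup Q] [Module A Q] (N : Submodule A Q)
    (h1 : Finite N) (h2 : Finite (Q ⧸ N)) : Finite Q := by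
  obtain ⟨σ, hσ⟩ := (Submodule.Quotient.mk_surjective N).hasRightInverse
  refine Finite.of_surjective (fun p : N × (Q ⧸ N) => (p.1 : Q) + σ p.2) ?_
  intro q
  have hmem : q - σ (Submodule.Quotient.mk q) ∈ N := by
    rw [← Submodule.Quotient.mk_eq_zero, Submodule.Quotient.mk_sub, hσ, sub_self]
  exact ⟨⟨⟨_, hmem⟩, Submodule.Quotient.mk q⟩, by simp⟩

lemma finite_of_fg_of_ann (I : Ideal A) [Finite (A ⧸ I)] (Q : Type*) [AddCommGroup Q]
    [Module A Q] [Module.Finite A Q] (hann : ∀ x ∈ I, ∀ q : Q, x • q = 0) : Finite Q := by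
  obtain ⟨s, hs⟩ := Module.Finite.fg_top (R := A) (M := Q)
  obtain ⟨σ, hσ⟩ := (Ideal.Quotient.mk_surjective (I := I)).hasRightInverse
  refine Finite.of_surjective
    (fun c : {x // x ∈ s} → A ⧸ I => ∑ i : {x // x ∈ s}, σ (c i) • (i : Q)) ?_
  intro q
  have hq : q ∈ Submodule.span A (s : Set Q) := hs ▸ Submodule.mem_top
  obtain ⟨f, -, hf⟩ := Submodule.mem_span_finset.1 hq
  refine ⟨fun i => Ideal.Quotient.mk I (f i), ?_⟩
  have key : ∀ i : {x // x ∈ s}, σ (Ideal.Quotient.mk I (f i)) • (i : Q) = f i • (i : Q) := by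
    intro i
    have hd : σ (Ideal.Quotient.mk I (f (i : Q))) - f (i : Q) ∈ I := by
      rw [← Ideal.Quotient.eq_zero_iff_mem, map_sub, hσ, sub_self]
    have h0 := hann _ hd (i : Q)
    rw [sub_smul, sub_eq_zero] at h0
    exact h0
  calc ∑ i : {x // x ∈ s}, σ (Ideal.Quotient.mk I (f i)) • (i : Q)
      = ∑ i : {x // x ∈ s}, f (i : Q) • (i : Q) := Finset.sum_congr rfl fun i _ => key i
    _ = ∑ i ∈ s, f i • i := by rw [← Finset.sum_coe_sort s (fun i => f i • i)]
    _ = q := hf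

lemma span_t_eq_pow_max [IsDomain A] [IsDiscreteValuationRing A] {t : A} (ht0 : t ≠ 0)
    (ht : t ∈ IsLocalRing.maximalIdeal A) :
    ∃ v : ℕ, 1 ≤ v ∧ Ideal.span {t} = (IsLocalRing.maximalIdeal A) ^ v := by
  obtain ⟨π, hπ⟩ := IsDiscreteValuationRing.exists_irreducible A
  obtain ⟨v, hv⟩ := IsDiscreteValuationRing.associated_pow_irreducible ht0 hπ
  have h1 : Ideal.span {t} = (IsLocalRing.maximalIdeal A) ^ v := by
    rw [(IsDiscreteValuationRing.irreducible_iff_uniformizer π).mp hπ, Ideal.span_singleton_pow]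
    exact Ideal.span_singleton_eq_span_singleton.mpr hv
  refine ⟨v, ?_, h1⟩
  rcases Nat.eq_zero_or_pos v with rfl | h
  · rw [pow_zero, Ideal.one_eq_top] at h1
    exact absurd (Ideal.span_singleton_eq_top.mp h1) ((IsLocalRing.mem_maximalIdeal t).mp ht)
  · exact h

lemma finite_quot_pow [IsNoetherianRing A] [IsLocalRing A]
    [Finite (IsLocalRing.ResidueField A)] :
    ∀ k : ℕ, Finite (A ⧸ (IsLocalRing.maximalIdeal A) ^ k) := by
  have hres : Finite (A ⧸ IsLocalRing.maximalIdeal A) :=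
    inferInstanceAs (Finite (IsLocalRing.ResidueField A))
  intro k
  induction k with
  | zero =>
    have : Subsingleton (A ⧸ (IsLocalRing.maximalIdeal A) ^ 0) := by
      rw [pow_zero, Ideal.one_eq_top]
      exact Ideal.Quotient.subsingleton_iff.mpr rfl
    exact Finite.of_subsingleton
  | succ k ih =>
    set I : Ideal A := IsLocalRing.maximalIdeal A
    set p : Submodule A A := (I ^ (k+1) : Ideal A)
    set q : Submodule A A := (I ^ k : Ideal A)
    have hpq : p ≤ q := Ideal.pow_le_pow_right (Nat.le_succ k)
    set N : Submodule A (A ⧸ p) := q.map p.mkQ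
    have hNfin : Finite N := by
      have hfg : Module.Finite A N := by
        rw [Module.Finite.iff_fg]
        exact (IsNoetherian.noetherian q).map _
      refine finite_of_fg_of_ann I N ?_
      rintro x hx ⟨qq, hqq⟩
      obtain ⟨y, hy, rfl⟩ := hqq
      refine Subtype.ext ?_
      show x • (p.mkQ y) = 0
      rw [← map_smul, Submodule.mkQ_apply, Submodule.Quotient.mk_eq_zero]
      show x • y ∈ (I ^ (k+1) : Ideal A)
      rw [pow_succ]
      rw [smul_eq_mul, mul_comm x y]
      exact Ideal.mul_mem_mul hy hx
    have hQfin : Finite ((A ⧸ p) ⧸ N) :=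
      Finite.of_equiv _ (Submodule.quotientQuotientEquivQuotient p q hpq).symm.toEquiv
    exact finite_of_sub_quot N hNfin hQfin

lemma finite_quot_span_t [IsDomain A] [IsDiscreteValuationRing A]
    [Finite (IsLocalRing.ResidueField A)] {t : A} (ht0 : t ≠ 0)
    (ht : t ∈ IsLocalRing.maximalIdeal A) : Finite (A ⧸ Ideal.span {t}) := by
  obtain ⟨v, hv1, hJ⟩ := span_t_eq_pow_max ht0 ht
  have := finite_quot_pow (A := A) v
  exact Finite.of_equiv _ (Ideal.quotEquivOfEq hJ.symm).toEquiv

end Helpers5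

section ContinuousCohomology

variable (A : Type) [CommRing A] (Γ : Type) [Group Γ] [TopologicalSpace Γ]
  (M : Type) [AddCommGroup M] [Module A M] [TopologicalSpace M] [ContinuousAdd M]
  [ContinuousConstSMul A M] [DistribMulAction Γ M] [SMulCommClass Γ A M]

/-- The inhomogeneous cochain differential on (not necessarily continuous) cochains,
as an `A`-linear map. -/
noncomputable def cochainD (n : ℕ) : ((Fin n → Γ) → M) →ₗ[A] ((Fin (n + 1) → Γ) → M) :=
  LinearMap.pi fun g =>
    (DistribMulAction.toLinearMap A M (g 0)).comp
        (LinearMap.proj fun i : Fin n => g i.succ)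
      + ∑ j : Fin n, ((-1 : ℤ) ^ ((j : ℕ) + 1)) •
          LinearMap.proj (R := A) (φ := fun _ : Fin n → Γ => M)
            (fun i : Fin n =>
              if (i : ℕ) < (j : ℕ) then g i.castSucc
              else if i = j then g i.castSucc * g i.succ else g i.succ)
      + ((-1 : ℤ) ^ (n + 1)) •
          LinearMap.proj (R := A) (φ := fun _ : Fin n → Γ => M)
            (fun i : Fin n => g i.castSucc)

/-- The submodule of continuous cochains. -/
def contCochains (n : ℕ) : Submodule A ((Fin n → Γ) → M) where
  carrier := {f | Continuous f}
  add_mem' := fun hf hg => hf.add hg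
  zero_mem' := continuous_const
  smul_mem' := fun a _ hf => hf.const_smul a

/-- Continuous cocycles. -/
noncomputable def contCocycles (n : ℕ) : Submodule A ((Fin n → Γ) → M) :=
  contCochains A Γ M n ⊓ LinearMap.ker (cochainD A Γ M n)

/-- Coboundaries of continuous cochains. -/
noncomputable def contCoboundaries : (n : ℕ) → Submodule A ((Fin n → Γ) → M)
  | 0 => ⊥
  | (n + 1) => Submodule.map (cochainD A Γ M n) (contCochains A Γ M n)

/-- Continuous (cochain) group cohomology `H^n(Γ, M)`, an `A`-module. -/
noncomputable abbrev ContinuousCohomology (n : ℕ) :=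
  contCocycles A Γ M n ⧸
    (Submodule.comap (contCocycles A Γ M n).subtype (contCoboundaries A Γ M n))

end ContinuousCohomology

section LimitB
variable {A : Type} [CommRing A] {Γ : Type} [Group Γ] [TopologicalSpace Γ]
  {M : Type} [AddCommGroup M] [Module A M] [TopologicalSpace M] [ContinuousAdd M]
  [ContinuousConstSMul A M] [DistribMulAction Γ M] [SMulCommClass Γ A M]

lemma limitB (t : A)
    (hadic : ∀ s : Set M, IsOpen s ↔ ∀ m ∈ s, ∃ n : ℕ,
      {y : M | y - m ∈ (Ideal.span {t} ^ n) • (⊤ : Submodule A M)} ⊆ s)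
    (hpre : IsPrecomplete (Ideal.span {t}) M) (i : ℕ)
    (bseq : ℕ → ((Fin i → Γ) → M)) (hb : ∀ k, bseq k ∈ contCoboundaries A Γ M i) :
    ∃ b ∈ contCoboundaries A Γ M i, ∀ K : ℕ, ∃ w : (Fin i → Γ) → M,
      b - (∑ k ∈ Finset.range K, t ^ k • bseq k) = t ^ K • w := by
  cases i with
  | zero =>
    refine ⟨0, Submodule.zero_mem _, fun K => ⟨0, ?_⟩⟩
    have hz : ∀ k, bseq k = 0 := fun k => (Submodule.mem_bot A).mp (hb k)
    simp [hz]
  | succ n =>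
    have hb' : ∀ k, ∃ c, c ∈ contCochains A Γ M n ∧ cochainD A Γ M n c = bseq k := by
      intro k
      obtain ⟨c, hc, hc2⟩ := Submodule.mem_map.mp (hb k)
      exact ⟨c, hc, hc2⟩
    choose cs hcsmem hcseq using hb'
    set u : ℕ → (Fin n → Γ) → M := fun K => ∑ k ∈ Finset.range K, t ^ k • cs k with hu_def
    have humem : ∀ K, u K ∈ contCochains A Γ M n := fun K =>
      Submodule.sum_mem _ fun k _ => Submodule.smul_mem _ _ (hcsmem k)
    have hucont : ∀ K, Continuous (u K) := fun K => humem K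
    have hucauchy : ∀ {K K'}, K ≤ K' → ∃ w : (Fin n → Γ) → M, u K' - u K = t ^ K • w := by
      intro K K' hKK'
      refine ⟨∑ k ∈ Finset.Ico K K', t ^ (k - K) • cs k, ?_⟩
      rw [hu_def]
      rw [Finset.smul_sum]
      rw [eq_comm, ← Finset.sum_Ico_eq_sub _ hKK']
      refine Finset.sum_congr rfl fun k hk => ?_
      rw [smul_smul, ← pow_add, Nat.add_sub_cancel' (Finset.mem_Ico.mp hk).1]
    obtain ⟨c, hccont, hcw⟩ := funLimit hadic hpre u hucont hucauchy
    refine ⟨cochainD A Γ M n c, Submodule.mem_map_of_mem hccont, fun K => ?_⟩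
    obtain ⟨w, hw⟩ := hcw K
    refine ⟨cochainD A Γ M n w, ?_⟩
    have hdu : cochainD A Γ M n (u K) = ∑ k ∈ Finset.range K, t ^ k • bseq k := by
      rw [hu_def, map_sum]
      exact Finset.sum_congr rfl fun k _ => by rw [map_smul, hcseq]
    rw [← hdu, ← map_sub, hw, map_smul]

end LimitB

set_option maxHeartbeats 1600000 in
/-- **Finite generation of continuous cohomology is detected mod `t`.**
Let `A` be the ring of integers of a local field (a complete discrete valuation ring with
finite residue field), `t ∈ 𝔪_A` nonzero, `Γ` a profinite group, and `M` a finitely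
generated `A`-module with its adic topology and a continuous `A`-linear `Γ`-action.
Then the continuous cohomology `H^i(Γ, M)` is a finitely generated `A`-module if and only
if `H^i(Γ, M)/(t)` is finite. -/
theorem finite_continuousCohomology_iff_finite_mod_t
    (A : Type) [CommRing A] [IsDomain A] [IsDiscreteValuationRing A]
    [IsAdicComplete (IsLocalRing.maximalIdeal A) A] [Finite (IsLocalRing.ResidueField A)]
    (t : A) (ht0 : t ≠ 0) (ht : t ∈ IsLocalRing.maximalIdeal A)
    (Γ : Type) [Group Γ] [TopologicalSpace Γ] [IsTopologicalGroup Γ]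
    [CompactSpace Γ] [T2Space Γ] [TotallyDisconnectedSpace Γ]
    (M : Type) [AddCommGroup M] [Module A M] [Module.Finite A M]
    [TopologicalSpace M] [ContinuousAdd M] [ContinuousConstSMul A M]
    [DistribMulAction Γ M] [SMulCommClass Γ A M] [ContinuousSMul Γ M]
    (hadic : ∀ s : Set M, IsOpen s ↔ ∀ m ∈ s, ∃ n : ℕ,
      {y : M | y - m ∈ (Ideal.span {t} ^ n) • (⊤ : Submodule A M)} ⊆ s)
    (i : ℕ) :
    Module.Finite A (ContinuousCohomology A Γ M i) ↔
      Finite ((ContinuousCohomology A Γ M i) ⧸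
        ((Ideal.span {t}) • (⊤ : Submodule A (ContinuousCohomology A Γ M i)))) := by
  classical
  constructor
  · -- forward: finitely generated ⇒ finite mod t
    intro hfg
    haveI : Module.Finite A ((ContinuousCohomology A Γ M i) ⧸
        ((Ideal.span {t}) • (⊤ : Submodule A (ContinuousCohomology A Γ M i)))) :=
      Module.Finite.of_surjective
        ((Ideal.span {t} • (⊤ : Submodule A (ContinuousCohomology A Γ M i))).mkQ)
        (Submodule.Quotient.mk_surjective _)
    haveI : Finite (A ⧸ Ideal.span {t}) := finite_quot_span_t ht0 ht
    refine finite_of_fg_of_ann (Ideal.span {t}) _ ?_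
    intro x hx qq
    obtain ⟨h, rfl⟩ := Submodule.Quotient.mk_surjective _ qq
    rw [← Submodule.Quotient.mk_smul, Submodule.Quotient.mk_eq_zero]
    exact Submodule.smul_mem_smul hx Submodule.mem_top
  · -- backward
    intro hfin
    obtain ⟨v, hv1, hJ⟩ := span_t_eq_pow_max ht0 ht
    have hpreA : IsPrecomplete (Ideal.span {t}) A :=
      isPrecomplete_of_pow hv1 hJ inferInstance
    have hpreM : IsPrecomplete (Ideal.span {t}) M := by
      obtain ⟨r, p, hp⟩ := Module.Finite.exists_fin' A M
      exact precomplete_of_surjective p hp (pi_precomplete hpreA)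
    have hhausM : IsHausdorff (Ideal.span {t}) M := by
      refine isHausdorff_of_pow hv1 hJ ?_
      constructor
      intro x hx
      have hbot : (⨅ n : ℕ, (IsLocalRing.maximalIdeal A) ^ n • ⊤ : Submodule A M) = ⊥ :=
        Ideal.iInf_pow_smul_eq_bot_of_isLocalRing (I := IsLocalRing.maximalIdeal A) (M := M)
          (Ideal.IsMaximal.ne_top (IsLocalRing.maximalIdeal.isMaximal A))
      have hx' : x ∈ (⨅ n : ℕ, (IsLocalRing.maximalIdeal A) ^ n • ⊤ : Submodule A M) :=
        Submodule.mem_iInf _ |>.mpr fun n => by simpa using SModEq.sub_mem.mp (hx n)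
      rw [hbot] at hx'
      simpa using hx'
    obtain ⟨σH, hσH⟩ := (Submodule.Quotient.mk_surjective
      ((Ideal.span {t}) • (⊤ : Submodule A (ContinuousCohomology A Γ M i)))).hasRightInverse
    suffices hspan : ∀ h : ContinuousCohomology A Γ M i,
        h ∈ Submodule.span A (Set.range σH) by
      refine Module.finite_def.mpr ?_
      rw [Submodule.fg_def]
      exact ⟨Set.range σH, Set.finite_range σH,
        eq_top_iff.mpr fun h _ => hspan h⟩
    intro h
    -- one-step decomposition
    have hdec : ∀ h' : ContinuousCohomology A Γ M i,
        ∃ jh : ((ContinuousCohomology A Γ M i) ⧸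
            ((Ideal.span {t}) • (⊤ : Submodule A (ContinuousCohomology A Γ M i)))) ×
            ContinuousCohomology A Γ M i,
          h' = σH jh.1 + t • jh.2 := by
      intro h'
      have hmem : h' - σH (Submodule.Quotient.mk h') ∈
          ((Ideal.span {t}) • (⊤ : Submodule A (ContinuousCohomology A Γ M i))) := by
        rw [← Submodule.Quotient.mk_eq_zero, Submodule.Quotient.mk_sub, hσH, sub_self]
      obtain ⟨y, hy⟩ := memJ1'.mp hmem
      exact ⟨⟨Submodule.Quotient.mk h', y⟩, sub_eq_iff_eq_add'.mp hy⟩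
    choose F hF using hdec
    set hs : ℕ → ContinuousCohomology A Γ M i :=
      fun k => Nat.rec h (fun _ p => (F p).2) k with hhs
    set q : ℕ → ((ContinuousCohomology A Γ M i) ⧸
        ((Ideal.span {t}) • (⊤ : Submodule A (ContinuousCohomology A Γ M i)))) :=
      fun k => (F (hs k)).1 with hq
    have hrel : ∀ k, hs k = σH (q k) + t • hs (k+1) := fun k => hF (hs k)
    -- lift everything to cocycles
    obtain ⟨zlift, hzlift⟩ := (Submodule.Quotient.mk_surjective
      (Submodule.comap (contCocycles A Γ M i).subtype
        (contCoboundaries A Γ M i))).hasRightInverse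
    set zv := fun j => zlift (σH j) with hzv
    set ws := fun k => zlift (hs k) with hws
    set b : ℕ → ((Fin i → Γ) → M) := fun k =>
      (↑(ws k) : (Fin i → Γ) → M) - ↑(zv (q k)) - t • ↑(ws (k+1)) with hbdef
    have hbB : ∀ k, b k ∈ contCoboundaries A Γ M i := by
      intro k
      have hmem : ws k - zv (q k) - t • ws (k+1) ∈
          Submodule.comap (contCocycles A Γ M i).subtype (contCoboundaries A Γ M i) := by
        rw [← Submodule.Quotient.mk_eq_zero]
        have hmkeq : (Submodule.Quotient.mk (ws k - zv (q k) - t • ws (k+1)) :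
            ContinuousCohomology A Γ M i) = hs k - σH (q k) - t • hs (k+1) := by
          simp only [hws, hzv]
          rw [Submodule.Quotient.mk_sub, Submodule.Quotient.mk_sub,
            Submodule.Quotient.mk_smul, hzlift, hzlift, hzlift]
        rw [hmkeq, hrel k]
        abel
      rw [Submodule.mem_comap] at hmem
      simpa [hbdef] using hmem
    have hstep : ∀ K, (↑(ws K) : (Fin i → Γ) → M)
        = ↑(zv (q K)) + b K + t • ↑(ws (K+1)) := by
      intro K
      simp only [hbdef]
      abel
    have htel : ∀ K, (↑(ws 0) : (Fin i → Γ) → M)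
        = (∑ k ∈ Finset.range K, t^k • ((↑(zv (q k)) : (Fin i → Γ) → M) + b k))
          + t^K • ↑(ws K) := by
      intro K
      induction K with
      | zero => simp
      | succ K ih =>
        rw [Finset.sum_range_succ, ih, hstep K, smul_add, smul_add, smul_smul, ← pow_succ]
        abel
    haveI := Fintype.ofFinite ((ContinuousCohomology A Γ M i) ⧸
      ((Ideal.span {t}) • (⊤ : Submodule A (ContinuousCohomology A Γ M i))))
    set Af : ((ContinuousCohomology A Γ M i) ⧸
        ((Ideal.span {t}) • (⊤ : Submodule A (ContinuousCohomology A Γ M i)))) → ℕ → A :=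
      fun j K => ∑ k ∈ Finset.range K, if q k = j then t^k else 0 with hAfdef
    have hAcauchy : ∀ j, ∀ {m n : ℕ}, m ≤ n →
        Af j m ≡ Af j n [SMOD (Ideal.span {t})^m • (⊤ : Submodule A A)] := by
      intro j m n hmn
      have hsub : Af j n - Af j m
          = ∑ k ∈ Finset.Ico m n, if q k = j then t^k else 0 := by
        simp only [hAfdef]
        exact (Finset.sum_Ico_eq_sub _ hmn).symm
      have h2 : (∑ k ∈ Finset.Ico m n, if q k = j then t^k else 0)
          = t^m • ∑ k ∈ Finset.Ico m n, if q k = j then t^(k-m) else 0 := by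
        rw [Finset.smul_sum]
        refine Finset.sum_congr rfl fun k hk => ?_
        have hmk := (Finset.mem_Ico.mp hk).1
        split_ifs
        · rw [smul_eq_mul, ← pow_add, Nat.add_sub_cancel' hmk]
        · simp
      refine SModEq.sub_mem.mpr (memJpow'.mpr
        ⟨-(∑ k ∈ Finset.Ico m n, if q k = j then t^(k-m) else 0), ?_⟩)
      rw [smul_neg, ← h2, ← hsub, neg_sub]
    choose α hα using fun j => hpreA.prec (fun {m n} hmn => hAcauchy j hmn)
    have hsplit : ∀ K, (∑ k ∈ Finset.range K, t^k • (↑(zv (q k)) : (Fin i → Γ) → M))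
        = ∑ j, (Af j K) • (↑(zv j) : (Fin i → Γ) → M) := by
      intro K
      symm
      calc ∑ j, (Af j K) • (↑(zv j) : (Fin i → Γ) → M)
          = ∑ j, ∑ k ∈ Finset.range K,
              (if q k = j then t ^ k • (↑(zv j) : (Fin i → Γ) → M) else 0) := by
            refine Finset.sum_congr rfl fun j _ => ?_
            simp only [hAfdef]
            rw [Finset.sum_smul]
            exact Finset.sum_congr rfl fun k _ => by rw [ite_smul, zero_smul]
        _ = ∑ k ∈ Finset.range K, ∑ j,
              (if q k = j then t ^ k • (↑(zv j) : (Fin i → Γ) → M) else 0) :=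
            Finset.sum_comm
        _ = ∑ k ∈ Finset.range K, t^k • (↑(zv (q k)) : (Fin i → Γ) → M) := by
            refine Finset.sum_congr rfl fun k _ => ?_
            simp
    obtain ⟨binf, hbinfB, hbinfw⟩ := limitB t hadic hpreM i b hbB
    have hkey : ∀ x : (Fin i → Γ),
        ((↑(ws 0) : (Fin i → Γ) → M)
          - (∑ j, α j • (↑(zv j) : (Fin i → Γ) → M) + binf)) x = 0 := by
      intro x
      refine hhausM.haus _ fun K => SModEq.sub_mem.mpr ?_
      rw [sub_zero]
      obtain ⟨w, hw⟩ := hbinfw K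
      choose β hβ using fun j => memJpow'.mp (SModEq.sub_mem.mp (hα j K))
      have hsum : (∑ j, (Af j K) • (↑(zv j) : (Fin i → Γ) → M))
          - ∑ j, α j • (↑(zv j) : (Fin i → Γ) → M)
          = t^K • ∑ j, β j • (↑(zv j) : (Fin i → Γ) → M) := by
        rw [← Finset.sum_sub_distrib, Finset.smul_sum]
        refine Finset.sum_congr rfl fun j _ => ?_
        rw [← sub_smul, hβ j, smul_eq_mul, mul_smul]
      have hD : (↑(ws 0) : (Fin i → Γ) → M)
          - (∑ j, α j • (↑(zv j) : (Fin i → Γ) → M) + binf)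
          = t^K • ((∑ j, β j • (↑(zv j) : (Fin i → Γ) → M)) + ↑(ws K) - w) := by
        have e1 : ∑ k ∈ Finset.range K,
            t^k • ((↑(zv (q k)) : (Fin i → Γ) → M) + b k)
            = (∑ j, (Af j K) • (↑(zv j) : (Fin i → Γ) → M))
              + ∑ k ∈ Finset.range K, t^k • b k := by
          rw [← hsplit K, ← Finset.sum_add_distrib]
          exact Finset.sum_congr rfl fun k _ => smul_add _ _ _
        rw [htel K, e1, smul_sub, smul_add, ← hsum, ← hw]
        abel
      exact memJpow'.mpr ⟨_, congrFun hD x⟩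
    have hfun : (↑(ws 0) : (Fin i → Γ) → M)
        = ∑ j, α j • (↑(zv j) : (Fin i → Γ) → M) + binf :=
      sub_eq_zero.mp (funext hkey)
    set zc : contCocycles A Γ M i := ∑ j, α j • zv j with hzc
    have hzcoe : (↑zc : (Fin i → Γ) → M) = ∑ j, α j • (↑(zv j) : (Fin i → Γ) → M) := by
      rw [hzc, AddSubmonoidClass.coe_finset_sum]
      exact Finset.sum_congr rfl fun j _ => rfl
    have hdiffB : ws 0 - zc ∈ Submodule.comap (contCocycles A Γ M i).subtype
        (contCoboundaries A Γ M i) := by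
      rw [Submodule.mem_comap]
      have hcoe : (contCocycles A Γ M i).subtype (ws 0 - zc) = binf := by
        rw [map_sub]
        show (↑(ws 0) : (Fin i → Γ) → M) - ↑zc = binf
        rw [hfun, hzcoe]
        abel
      rw [hcoe]
      exact hbinfB
    have hmkeq : (Submodule.Quotient.mk (ws 0) : ContinuousCohomology A Γ M i)
        = Submodule.Quotient.mk zc := (Submodule.Quotient.eq _).mpr hdiffB
    have hh : h = Submodule.Quotient.mk (ws 0) := (hzlift h).symm
    rw [hh, hmkeq]
    have hmkz : (Submodule.Quotient.mk zc : ContinuousCohomology A Γ M i)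
        = ∑ j, α j • σH j := by
      have hmap := map_sum ((Submodule.comap (contCocycles A Γ M i).subtype
        (contCoboundaries A Γ M i)).mkQ) (fun j => α j • zv j) Finset.univ
      simp only [Submodule.mkQ_apply, map_smul] at hmap
      rw [hzc, hmap]
      refine Finset.sum_congr rfl fun j _ => ?_
      rw [hzv, hzlift]
    rw [hmkz]
    exact Submodule.sum_mem _ fun j _ =>
      Submodule.smul_mem _ _ (Submodule.subset_span ⟨j, rfl⟩)
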